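/- Let p > 2, f(t) = t²/2 − t^p/p, and define A : (0, ∞) \ {1} → ℝ by A(t) = 1/2 − (f(t) − f(1)) f''(t) / f'(t)². Then A extends continuously to (0, ∞) with A(1) = 0; moreover A(t) > 0 for t ∈ (0, 1), A(t) < 0 for t ∈ (1, ∞), lim_{t→0⁺} t² A(t) = f(1), and lim_{t→∞} A(t) = −(p−2)/(2p). -/

import Mathlib

open Set Real Filter Topology

namespace Stmt4
noncomputable def F1 (p t : ℝ) : ℝ := t - t ^ (p-1)
noncomputable def F2 (p t : ℝ) : ℝ := 1 - (p-1) * t ^ (p-2)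
noncomputable def G (p t : ℝ) : ℝ := t^2/2 - t^p/p - (1/2 - 1/p)

variable {p t : ℝ}

lemma hG' (hp : 2 < p) (ht : 0 < t) : HasDerivAt (G p) (F1 p t) t := by
  have h1 : HasDerivAt (fun x : ℝ => x ^ p) (p * t ^ (p-1)) t :=
    Real.hasDerivAt_rpow_const (Or.inl ht.ne')
  have h2 : HasDerivAt (fun x : ℝ => x ^ 2) (2 * t ^ 1) t := by
    simpa using hasDerivAt_pow 2 t
  have := ((h2.div_const 2).sub (h1.div_const p)).sub_const (1/2 - 1/p)
  refine HasDerivAt.congr_deriv this ?_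
  have hp0 : p ≠ 0 := by positivity
  field_simp [F1]
  rfl

lemma hF1' (hp : 2 < p) (ht : 0 < t) : HasDerivAt (F1 p) (F2 p t) t := by
  have h1 : HasDerivAt (fun x : ℝ => x ^ (p-1)) ((p-1) * t ^ (p-1-1)) t :=
    Real.hasDerivAt_rpow_const (Or.inl ht.ne')
  have := (hasDerivAt_id t).sub h1
  refine HasDerivAt.congr_deriv this ?_
  rw [show p-1-1 = p-2 by ring]
  simp [F2]

lemma hF2' (hp : 2 < p) (ht : 0 < t) :
    HasDerivAt (F2 p) (-((p-1)*(p-2)*t^(p-3))) t := by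
  have h1 : HasDerivAt (fun x : ℝ => x ^ (p-2)) ((p-2) * t ^ (p-2-1)) t :=
    Real.hasDerivAt_rpow_const (Or.inl ht.ne')
  have := (hasDerivAt_const t (1:ℝ)).sub (h1.const_mul (p-1))
  refine HasDerivAt.congr_deriv this ?_
  have : p - 2 - 1 = p - 3 := by ring
  rw [this]; ring

lemma F1_eq (ht : 0 < t) : F1 p t = t * (1 - t ^ (p-2)) := by
  have h : t ^ (p-1) = t * t ^ (p-2) := by
    rw [show p-1 = 1 + (p-2) by ring, Real.rpow_add ht, Real.rpow_one]
  simp [F1, h]; ring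

lemma F1_pos (hp : 2 < p) (ht : 0 < t) (ht1 : t < 1) : 0 < F1 p t := by
  rw [F1_eq ht]
  have : t ^ (p-2) < 1 := Real.rpow_lt_one ht.le ht1 (by linarith)
  nlinarith

lemma F1_neg (hp : 2 < p) (ht1 : 1 < t) : F1 p t < 0 := by
  have ht : (0:ℝ) < t := by linarith
  rw [F1_eq ht]
  have : 1 < t ^ (p-2) := Real.one_lt_rpow_iff_of_pos ht |>.mpr (Or.inl ⟨ht1, by linarith⟩)
  nlinarith

lemma F1_ne (hp : 2 < p) (ht : 0 < t) (ht1 : t ≠ 1) : F1 p t ≠ 0 := by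
  rcases lt_or_gt_of_ne ht1 with h | h
  · exact (F1_pos hp ht h).ne'
  · exact (F1_neg hp h).ne

lemma G_one (hp : 2 < p) : G p 1 = 0 := by simp [G]

lemma F1_one : F1 p 1 = 0 := by simp [F1]

lemma F2_one : F2 p 1 = 2 - p := by simp [F2]; ring


lemma G_neg (hp : 2 < p) (ht : 0 < t) (ht1 : t ≠ 1) : G p t < 0 := by
  rcases lt_or_gt_of_ne ht1 with h | h
  · have hmono : StrictMonoOn (G p) (Ioc 0 1) := by
      apply strictMonoOn_of_deriv_pos (convex_Ioc 0 1)
      · intro x hx; exact (hG' hp hx.1).continuousAt.continuousWithinAt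
      · intro x hx
        rw [interior_Ioc] at hx
        rw [(hG' hp hx.1).deriv]
        exact F1_pos hp hx.1 hx.2
    have := hmono ⟨ht, h.le⟩ ⟨one_pos, le_refl 1⟩ h
    rwa [G_one hp] at this
  · have hanti : StrictAntiOn (G p) (Ici 1) := by
      apply strictAntiOn_of_deriv_neg (convex_Ici 1)
      · intro x hx
        exact (hG' hp (lt_of_lt_of_le one_pos hx)).continuousAt.continuousWithinAt
      · intro x hx
        rw [interior_Ici] at hx
        rw [(hG' hp (by linarith [mem_Ioi.mp hx] : (0:ℝ) < x)).deriv]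
        exact F1_neg hp hx
    have := hanti self_mem_Ici (mem_Ici.mpr h.le) h
    rwa [G_one hp] at this

noncomputable def Phi (p t : ℝ) : ℝ := (F1 p t)^2 - 2 * G p t * F2 p t

lemma hPhi' (hp : 2 < p) (ht : 0 < t) :
    HasDerivAt (Phi p) (-2 * G p t * (-((p-1)*(p-2)*t^(p-3)))) t := by
  have h1 := (hF1' hp ht).pow 2
  have h2 := ((hG' hp ht).mul (hF2' hp ht)).const_mul 2
  have h3 := h1.sub h2
  have heq : Phi p = fun x => F1 p x ^ 2 - 2 * (G p x * F2 p x) := by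
    funext x; simp [Phi]; ring
  rw [heq]
  refine HasDerivAt.congr_deriv h3 ?_
  ring

lemma Phi_one (hp : 2 < p) : Phi p 1 = 0 := by
  simp [Phi, F1_one, G_one hp]

lemma Phi_deriv_neg (hp : 2 < p) (ht : 0 < t) (ht1 : t ≠ 1) :
    -2 * G p t * (-((p-1)*(p-2)*t^(p-3))) < 0 := by
  have hG := G_neg hp ht ht1
  have hr : (0:ℝ) < t ^ (p-3) := Real.rpow_pos_of_pos ht _
  have hK : (0:ℝ) < (p-1)*(p-2)*t^(p-3) :=
    mul_pos (mul_pos (by linarith) (by linarith)) hr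
  have := mul_neg_of_neg_of_pos hG hK
  nlinarith

lemma Phi_pos (hp : 2 < p) (ht : 0 < t) (ht1 : t < 1) : 0 < Phi p t := by
  have hanti : StrictAntiOn (Phi p) (Ioc 0 1) := by
    apply strictAntiOn_of_deriv_neg (convex_Ioc 0 1)
    · intro x hx; exact (hPhi' hp hx.1).continuousAt.continuousWithinAt
    · intro x hx
      rw [interior_Ioc] at hx
      rw [(hPhi' hp hx.1).deriv]
      exact Phi_deriv_neg hp hx.1 hx.2.ne
  have := hanti ⟨ht, ht1.le⟩ ⟨one_pos, le_refl 1⟩ ht1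
  rwa [Phi_one hp] at this

lemma Phi_neg (hp : 2 < p) (ht1 : 1 < t) : Phi p t < 0 := by
  have hanti : StrictAntiOn (Phi p) (Ici 1) := by
    apply strictAntiOn_of_deriv_neg (convex_Ici 1)
    · intro x hx
      exact (hPhi' hp (lt_of_lt_of_le one_pos hx)).continuousAt.continuousWithinAt
    · intro x hx
      rw [interior_Ici] at hx
      have hx1 := mem_Ioi.mp hx
      rw [(hPhi' hp (by linarith : (0:ℝ) < x)).deriv]
      exact Phi_deriv_neg hp (by linarith) hx1.ne'
  have := hanti self_mem_Ici (mem_Ici.mpr ht1.le) ht1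
  rwa [Phi_one hp] at this


lemma continuousAt_F1 (hp : 2 < p) (x : ℝ) : ContinuousAt (F1 p) x :=
  continuousAt_id.sub (Real.continuousAt_rpow_const x (p-1) (Or.inr (by linarith)))

lemma continuousAt_F2 (hp : 2 < p) (x : ℝ) : ContinuousAt (F2 p) x :=
  continuousAt_const.sub
    (continuousAt_const.mul (Real.continuousAt_rpow_const x (p-2) (Or.inr (by linarith))))

lemma continuousAt_G (hp : 2 < p) (x : ℝ) : ContinuousAt (G p) x := by
  have h1 : ContinuousAt (fun x : ℝ => x ^ (2:ℕ) / 2) x := by fun_prop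
  have h2 : ContinuousAt (fun x : ℝ => x ^ p / p) x :=
    (Real.continuousAt_rpow_const x p (Or.inr (by linarith))).div_const p
  exact (h1.sub h2).sub continuousAt_const

lemma tendsto_GF (hp : 2 < p) :
    Tendsto (fun t => G p t / (F1 p t)^2) (𝓝[≠] (1:ℝ)) (𝓝 (1/(2*(2-p)))) := by
  have hpos : ∀ᶠ x in 𝓝[≠] (1:ℝ), 0 < x :=
    eventually_nhdsWithin_of_eventually_nhds (eventually_gt_nhds one_pos)
  have hne : ∀ᶠ x in 𝓝[≠] (1:ℝ), x ≠ 1 := by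
    filter_upwards [self_mem_nhdsWithin] with x hx using hx
  have hF2ne : ∀ᶠ x in 𝓝[≠] (1:ℝ), F2 p x ≠ 0 := by
    apply eventually_nhdsWithin_of_eventually_nhds
    apply (continuousAt_F2 hp 1).eventually_ne
    rw [F2_one]; intro h; linarith [h]
  apply HasDerivAt.lhopital_zero_nhdsNE (f' := F1 p)
    (g' := fun x => 2 * F1 p x ^ 1 * F2 p x)
  · filter_upwards [hpos] with x hx using hG' hp hx
  · filter_upwards [hpos] with x hx using (hF1' hp hx).pow 2
  · filter_upwards [hpos, hne, hF2ne] with x h0 h1 h2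
    have h3 := F1_ne hp h0 h1
    simp [h3, h2]
  · have h : Tendsto (G p) (𝓝 1) (𝓝 (G p 1)) := (continuousAt_G hp 1).tendsto
    rw [G_one hp] at h
    exact h.mono_left nhdsWithin_le_nhds
  · have h : Tendsto (fun x => (F1 p x)^2) (𝓝 1) (𝓝 ((F1 p 1)^2)) :=
      ((continuousAt_F1 hp 1).pow 2).tendsto
    rw [F1_one] at h; norm_num at h
    exact h.mono_left nhdsWithin_le_nhds
  · have h2 : Tendsto (fun x => 2 * F2 p x) (𝓝 (1:ℝ)) (𝓝 (2*(2-p))) := by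
      have : Tendsto (fun x => 2 * F2 p x) (𝓝 (1:ℝ)) (𝓝 (2 * F2 p 1)) :=
        (continuousAt_F2 hp 1).const_mul 2
      rwa [F2_one] at this
    have key : Tendsto (fun x => 1/(2 * F2 p x)) (𝓝[≠] (1:ℝ)) (𝓝 (1/(2*(2-p)))) := by
      have hne2 : (2:ℝ)*(2-p) ≠ 0 := by
        intro h; nlinarith
      exact (tendsto_const_nhds.div h2 hne2).mono_left nhdsWithin_le_nhds
    apply key.congr'
    filter_upwards [hpos, hne, hF2ne] with x h0 h1 h2'
    have hF := F1_ne hp h0 h1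
    field_simp

lemma tendsto_A1 (hp : 2 < p) :
    Tendsto (fun t => 1/2 - G p t * F2 p t / (F1 p t)^2) (𝓝[≠] (1:ℝ)) (𝓝 0) := by
  have hF2 : Tendsto (F2 p) (𝓝[≠] (1:ℝ)) (𝓝 (2-p)) := by
    have := (continuousAt_F2 hp 1).tendsto
    rw [F2_one] at this
    exact this.mono_left nhdsWithin_le_nhds
  have h1 := (tendsto_GF hp).mul hF2
  have h2 := (tendsto_const_nhds (α := ℝ) (x := (1:ℝ)/2) (f := 𝓝[≠] (1:ℝ))).sub h1
  have hval : (1:ℝ)/2 - 1/(2*(2-p)) * (2-p) = 0 := by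
    have : (2:ℝ)-p ≠ 0 := by intro h; linarith
    field_simp
    ring
  rw [hval] at h2
  apply h2.congr
  intro t
  ring

end Stmt4

open Stmt4 in
theorem stmt_4 (p : ℝ) (hp : 2 < p) (f A : ℝ → ℝ)
    (hf : ∀ t : ℝ, f t = t ^ 2 / 2 - t ^ p / p)
    (hA : ∀ t : ℝ, 0 < t → t ≠ 1 →
      A t = 1 / 2 - (f t - f 1) * deriv (deriv f) t / (deriv f t) ^ 2) :
    (∃ A' : ℝ → ℝ, ContinuousOn A' (Ioi 0) ∧ (∀ t : ℝ, 0 < t → t ≠ 1 → A' t = A t) ∧ A' 1 = 0) ∧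
    (∀ t ∈ Ioo (0 : ℝ) 1, 0 < A t) ∧ (∀ t ∈ Ioi (1 : ℝ), A t < 0) ∧
    Tendsto (fun t => t ^ 2 * A t) (nhdsWithin 0 (Ioi 0)) (nhds (f 1)) ∧
    Tendsto A atTop (nhds (-(p - 2) / (2 * p))) := by
  have hp0 : p ≠ 0 := by positivity
  have hfeq : f = fun t => G p t + (1/2 - 1/p) := by
    funext t; rw [hf]; simp [G]
  have hf1 : f 1 = 1/2 - 1/p := by
    rw [hf]; simp
  have hdf : ∀ t : ℝ, 0 < t → HasDerivAt f (F1 p t) t := by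
    intro t ht
    rw [hfeq]
    exact (hG' hp ht).add_const _
  have hderiv1 : ∀ t : ℝ, 0 < t → deriv f t = F1 p t := fun t ht => (hdf t ht).deriv
  have hderiv2 : ∀ t : ℝ, 0 < t → deriv (deriv f) t = F2 p t := by
    intro t ht
    have hev : deriv f =ᶠ[𝓝 t] F1 p :=
      Filter.eventuallyEq_of_mem (Ioi_mem_nhds ht) (fun x hx => hderiv1 x hx)
    exact ((hF1' hp ht).congr_of_eventuallyEq hev).deriv
  have hAeq : ∀ t : ℝ, 0 < t → t ≠ 1 →
      A t = 1/2 - G p t * F2 p t / (F1 p t)^2 := by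
    intro t ht ht1
    rw [hA t ht ht1, hderiv1 t ht, hderiv2 t ht]
    congr 2
    rw [hf, hf1]
    simp [G]
  have hAphi : ∀ t : ℝ, 0 < t → t ≠ 1 → A t = Phi p t / (2 * (F1 p t)^2) := by
    intro t ht ht1
    rw [hAeq t ht ht1, Phi]
    have hF := F1_ne hp ht ht1
    field_simp
  refine ⟨?_, ?_, ?_, ?_, ?_⟩
  · -- continuous extension
    refine ⟨fun t => if t = 1 then 0 else 1/2 - G p t * F2 p t / (F1 p t)^2, ?_, ?_, if_pos rfl⟩
    · intro x hx
      apply ContinuousAt.continuousWithinAt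
      by_cases hx1 : x = 1
      · subst hx1
        rw [ContinuousAt, if_pos rfl, ← nhdsNE_sup_pure (1:ℝ),
          tendsto_sup]
        constructor
        · apply (tendsto_A1 hp).congr'
          filter_upwards [self_mem_nhdsWithin] with x hx2
          simp only [mem_compl_iff, mem_singleton_iff] at hx2
          rw [if_neg hx2]
        · rw [tendsto_pure_left]
          intro s hs
          simpa using mem_of_mem_nhds (by simpa using hs)
      · have hx0 := mem_Ioi.mp hx
        have hcf : ContinuousAt (fun t => 1/2 - G p t * F2 p t / (F1 p t)^2) x := by
          apply continuousAt_const.sub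
          apply ContinuousAt.div
          · exact (continuousAt_G hp x).mul (continuousAt_F2 hp x)
          · exact (continuousAt_F1 hp x).pow 2
          · exact pow_ne_zero 2 (F1_ne hp hx0 hx1)
        apply hcf.congr
        filter_upwards [isOpen_ne.mem_nhds hx1] with y hy
        rw [if_neg hy]
    · intro t ht ht1
      simp only [if_neg ht1]
      exact (hAeq t ht ht1).symm
  · -- positive on (0,1)
    intro t ht
    rw [hAphi t ht.1 ht.2.ne]
    apply div_pos (Phi_pos hp ht.1 ht.2)
    have := F1_ne hp ht.1 ht.2.ne
    positivity
  · -- negative on (1,∞)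
    intro t ht
    have ht1 := mem_Ioi.mp ht
    rw [hAphi t (by linarith) ht1.ne']
    apply div_neg_of_neg_of_pos (Phi_neg hp ht1)
    have := F1_ne hp (by linarith) ht1.ne'
    positivity
  · -- limit at 0+
    have hmem : Ioo (0:ℝ) 1 ∈ 𝓝[>] (0:ℝ) := Ioo_mem_nhdsGT_of_mem ⟨le_refl 0, one_pos⟩
    have hlim : Tendsto (fun t : ℝ => t^2/2 - G p t * F2 p t / (1 - t^(p-2))^2)
        (𝓝[>] (0:ℝ)) (𝓝 (f 1)) := by
      have hs : Tendsto (fun t : ℝ => t^(p-2)) (𝓝[>] (0:ℝ)) (𝓝 0) := by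
        have h := (Real.continuousAt_rpow_const 0 (p-2) (Or.inr (by linarith))).tendsto
        rw [Real.zero_rpow (by intro h'; linarith [h'] : p - 2 ≠ 0)] at h
        exact h.mono_left nhdsWithin_le_nhds
      have hG0 : G p 0 = -(1/2 - 1/p) := by
        simp [G, Real.zero_rpow hp0]
      have htG : Tendsto (G p) (𝓝[>] (0:ℝ)) (𝓝 (-(1/2 - 1/p))) := by
        have := (continuousAt_G hp 0).tendsto
        rw [hG0] at this
        exact this.mono_left nhdsWithin_le_nhds
      have htF2 : Tendsto (F2 p) (𝓝[>] (0:ℝ)) (𝓝 1) := by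
        have := (continuousAt_F2 hp 0).tendsto
        have hF20 : F2 p 0 = 1 := by simp [F2, Real.zero_rpow (by intro h'; linarith [h'] : p - 2 ≠ 0)]
        rw [hF20] at this
        exact this.mono_left nhdsWithin_le_nhds
      have ht2 : Tendsto (fun t : ℝ => t^2/2) (𝓝[>] (0:ℝ)) (𝓝 0) := by
        have : Tendsto (fun t : ℝ => t^2/2) (𝓝 (0:ℝ)) (𝓝 ((0:ℝ)^2/2)) :=
          ((continuous_pow 2).div_const 2).tendsto 0
        norm_num at this
        exact this.mono_left nhdsWithin_le_nhds
      have hden : Tendsto (fun t : ℝ => (1 - t^(p-2))^2) (𝓝[>] (0:ℝ)) (𝓝 1) := by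
        have := ((tendsto_const_nhds (x := (1:ℝ))).sub hs).pow 2
        norm_num at this
        exact this
      have := ht2.sub ((htG.mul htF2).div hden one_ne_zero)
      rw [hf1]
      convert this using 2
      norm_num
      norm_num
    apply hlim.congr'
    filter_upwards [hmem] with t ht
    have ht0 := ht.1
    have hs1 : t^(p-2) < 1 := Real.rpow_lt_one ht0.le ht.2 (by linarith)
    have hsne : (1:ℝ) - t^(p-2) ≠ 0 := by intro h; nlinarith
    rw [hAeq t ht0 ht.2.ne, F1_eq ht0]
    field_simp
  · -- limit at ∞
    have hid : ∀ᶠ t in atTop, A t =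
        1/2 - ((t^(2-p)/2 - 1/p - (1/2-1/p)*t^(-p)) * (t^(2-p) - (p-1))) / (t^(2-p) - 1)^2 := by
      filter_upwards [eventually_gt_atTop (1:ℝ)] with t ht1
      have ht : (0:ℝ) < t := by linarith
      have hX : (0:ℝ) < t^p := Real.rpow_pos_of_pos ht p
      have h2R : t^((2:ℝ)) = t^(2:ℕ) := by
        rw [← Real.rpow_natCast t 2]; norm_num
      have e1 : t^(p-1) = t^p/t := by rw [Real.rpow_sub ht, Real.rpow_one]
      have e2 : t^(p-2) = t^p/t^(2:ℕ) := by rw [Real.rpow_sub ht, h2R]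
      have e3 : t^(2-p) = t^(2:ℕ)/t^p := by rw [Real.rpow_sub ht, h2R]
      have e4 : t^(-p) = 1/t^p := by rw [Real.rpow_neg ht.le, one_div]
      have hden : t^(2-p) - 1 ≠ 0 := by
        have : t^(2-p) < 1 := Real.rpow_lt_one_of_one_lt_of_neg ht1 (by linarith)
        intro h; nlinarith
      have hF := F1_ne hp ht ht1.ne'
      rw [hAeq t ht ht1.ne']
      have hFsq : (F1 p t)^2 ≠ 0 := pow_ne_zero 2 hF
      have hDsq : (t^(2-p) - 1)^2 ≠ 0 := pow_ne_zero 2 hden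
      congr 1
      rw [div_eq_div_iff hFsq hDsq, F1, G, F2, e1, e2, e3, e4]
      have ht2 : (t:ℝ)^(2:ℕ) ≠ 0 := pow_ne_zero 2 ht.ne'
      field_simp
    have hs : Tendsto (fun t : ℝ => t^(2-p)) atTop (𝓝 0) := by
      have := tendsto_rpow_neg_atTop (y := p - 2) (by linarith)
      simpa [show -(p-2) = 2-p by ring] using this
    have hsp : Tendsto (fun t : ℝ => t^(-p)) atTop (𝓝 0) :=
      tendsto_rpow_neg_atTop (by linarith)
    have hlim : Tendsto (fun t : ℝ =>
        1/2 - ((t^(2-p)/2 - 1/p - (1/2-1/p)*t^(-p)) * (t^(2-p) - (p-1))) / (t^(2-p) - 1)^2)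
        atTop (𝓝 (-(p - 2) / (2 * p))) := by
      have hnum : Tendsto (fun t : ℝ => (t^(2-p)/2 - 1/p - (1/2-1/p)*t^(-p)) * (t^(2-p) - (p-1)))
          atTop (𝓝 (((0:ℝ)/2 - 1/p - (1/2-1/p)*0) * (0 - (p-1)))) :=
        (((hs.div_const 2).sub tendsto_const_nhds).sub (tendsto_const_nhds.mul hsp)).mul
          (hs.sub tendsto_const_nhds)
      have hden : Tendsto (fun t : ℝ => (t^(2-p) - 1)^2) atTop (𝓝 (((0:ℝ) - 1)^2)) :=
        (hs.sub tendsto_const_nhds).pow 2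
      have := (tendsto_const_nhds (x := (1:ℝ)/2)).sub (hnum.div hden (by norm_num))
      convert this using 2
      · rfl
      field_simp
      ring
    exact hlim.congr' (by filter_upwards [hid] with t h using h.symm)
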